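/- Let n be a power of 2. Fix i ∈ [d]. The edges of the augmented hypergrid [n]^d along dimension i (pairs differing only in coordinate i by a power of 2, i.e., y_i − x_i = 2^a for some 0 ≤ a ≤ log₂n − 1) are exactly partitioned by the 2·log₂ n − 1 matchings {H^0_{i,a} : 0 ≤ a ≤ log₂ n − 1} ∪ {H^1_{i,a} : 0 ≤ a ≤ log₂ n − 2} (H^1_{i, log₂ n −1} is empty): every such edge belongs to exactly one matching, and each H^c_{i,a} is a matching (no vertex in two of its edges). -/

import Mathlib

/-- A dimension-`i` edge of the augmented hypergrid `[n]^d` (coordinates `0,…,n-1`,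
`n = 2^k`): the endpoints differ only in coordinate `i`, by `2^a` with `a < k`. -/
def DimEdge (n d k : ℕ) (i : Fin d) (e : (Fin d → ℕ) × (Fin d → ℕ)) : Prop :=
  (∀ j, e.1 j < n) ∧ (∀ j, e.2 j < n) ∧
    ∃ a : ℕ, a < k ∧ e.2 i = e.1 i + 2 ^ a ∧ ∀ j, j ≠ i → e.2 j = e.1 j

/-- The matching `H^c_{i,a}` of the augmented hypergrid: dimension-`i` edges of length
`2^a` whose lower endpoint satisfies `x_i mod 2^(a+1) < 2^a` (for `c = 0`, the "even"
matching) or `x_i mod 2^(a+1) ≥ 2^a` (for `c ≠ 0`, the "odd" matching). -/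
def HMatch (n d : ℕ) (i : Fin d) (c a : ℕ) (e : (Fin d → ℕ) × (Fin d → ℕ)) : Prop :=
  (∀ j, e.1 j < n) ∧ (∀ j, e.2 j < n) ∧ e.2 i = e.1 i + 2 ^ a ∧
    (∀ j, j ≠ i → e.2 j = e.1 j) ∧
    (if c = 0 then e.1 i % 2 ^ (a + 1) < 2 ^ a else 2 ^ a ≤ e.1 i % 2 ^ (a + 1))

lemma flip_mod (a y : ℕ) : (y + 2 ^ a) % 2 ^ (a + 1) < 2 ^ a ↔ 2 ^ a ≤ y % 2 ^ (a + 1) := by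
  have hm : (2 : ℕ) ^ (a + 1) = 2 ^ a + 2 ^ a := by rw [pow_succ]; ring
  have hp : 0 < (2 : ℕ) ^ a := Nat.pow_pos (by norm_num)
  have hr : y % 2 ^ (a + 1) < 2 ^ (a + 1) := Nat.mod_lt _ (by omega)
  have key : (y + 2 ^ a) % 2 ^ (a + 1) = (y % 2 ^ (a + 1) + 2 ^ a) % 2 ^ (a + 1) := by
    conv_lhs => rw [Nat.add_mod, Nat.mod_eq_of_lt (show 2 ^ a < 2 ^ (a + 1) by omega)]
  set r := y % 2 ^ (a + 1) with hrdef
  rcases lt_or_ge r (2 ^ a) with h | h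
  · rw [key, Nat.mod_eq_of_lt (by omega)]; omega
  · rw [key, Nat.mod_eq_sub_mod (by omega), Nat.mod_eq_of_lt (by omega)]; omega

/-- For `n = 2^k`, the dimension-`i` edges of the augmented hypergrid `[n]^d` are
exactly partitioned by the matchings `H^c_{i,a}` (`c ∈ {0,1}`, `a < k`):
(o) every `H^c_{i,a}`-edge is a dimension-`i` edge; (i) each `H^c_{i,a}` is a matching
(no vertex lies in two of its edges); (ii) every dimension-`i` edge belongs to exactly
one `H^c_{i,a}`; (iii) `H^1_{i,k-1}` is empty. -/
theorem stmt_12 (n d k : ℕ) (hk : 1 ≤ k) (hn : n = 2 ^ k) (i : Fin d) :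
    (∀ c ≤ 1, ∀ a < k, ∀ e, HMatch n d i c a e → DimEdge n d k i e) ∧
    (∀ c ≤ 1, ∀ a < k, ∀ e e', HMatch n d i c a e → HMatch n d i c a e' → e ≠ e' →
      e.1 ≠ e'.1 ∧ e.1 ≠ e'.2 ∧ e.2 ≠ e'.1 ∧ e.2 ≠ e'.2) ∧
    (∀ e, DimEdge n d k i e →
      ∃! ca : ℕ × ℕ, ca.1 ≤ 1 ∧ ca.2 < k ∧ HMatch n d i ca.1 ca.2 e) ∧
    (∀ e, ¬ HMatch n d i 1 (k - 1) e) := by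
  refine ⟨?_, ?_, ?_, ?_⟩
  · rintro c hc a ha e ⟨h1, h2, h3, h4, h5⟩
    exact ⟨h1, h2, a, ha, h3, h4⟩
  · rintro c hc a ha e e' ⟨h1, h2, h3, h4, h5⟩ ⟨h1', h2', h3', h4', h5'⟩ hne
    have key1 : e.1 ≠ e'.1 := by
      intro h
      apply hne
      have h2eq : e.2 = e'.2 := by
        funext j
        by_cases hj : j = i
        · subst hj; rw [h3, h3', h]
        · rw [h4 j hj, h4' j hj, h]
      exact Prod.ext h h2eq
    have flipcon : ∀ x y : ℕ, x = y + 2 ^ a →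
        (if c = 0 then x % 2 ^ (a + 1) < 2 ^ a else 2 ^ a ≤ x % 2 ^ (a + 1)) →
        (if c = 0 then y % 2 ^ (a + 1) < 2 ^ a else 2 ^ a ≤ y % 2 ^ (a + 1)) → False := by
      intro x y hxy hx hy
      subst hxy
      by_cases hc0 : c = 0
      · simp only [hc0, if_pos rfl] at hx hy
        exact absurd hy (Nat.not_lt.mpr ((flip_mod a y).mp hx))
      · simp only [if_neg hc0] at hx hy
        exact absurd ((flip_mod a y).mpr hy) (Nat.not_lt.mpr hx)
    refine ⟨key1, ?_, ?_, ?_⟩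
    · intro h
      exact flipcon (e.1 i) (e'.1 i) (by rw [h, h3']) h5 h5'
    · intro h
      exact flipcon (e'.1 i) (e.1 i) (by rw [← h, h3]) h5' h5
    · intro h
      apply key1
      funext j
      by_cases hj : j = i
      · subst hj
        have hji : e.2 j = e'.2 j := by rw [h]
        rw [h3, h3'] at hji
        omega
      · rw [← h4 j hj, ← h4' j hj, h]
  · rintro e ⟨h1, h2, a, ha, h3, h4⟩
    refine ⟨(if e.1 i % 2 ^ (a + 1) < 2 ^ a then 0 else 1, a), ⟨?_, ha, ?_⟩, ?_⟩
    · dsimp only; split <;> omega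
    · refine ⟨h1, h2, h3, h4, ?_⟩
      dsimp only
      by_cases h : e.1 i % 2 ^ (a + 1) < 2 ^ a
      · rw [if_pos h, if_pos rfl]; exact h
      · rw [if_neg h, if_neg one_ne_zero]; omega
    · rintro ⟨c', a'⟩ ⟨hc', ha', _, _, h3', _, h5'⟩
      dsimp only at hc' ha' h3' h5'
      have hpow : (2 : ℕ) ^ a' = 2 ^ a := by omega
      have haa : a' = a := Nat.pow_right_injective (le_refl 2) hpow
      have hc2 : c' = if e.1 i % 2 ^ (a + 1) < 2 ^ a then 0 else 1 := by
        rw [haa] at h5'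
        by_cases h : e.1 i % 2 ^ (a + 1) < 2 ^ a
        · rw [if_pos h]
          by_cases hc0 : c' = 0
          · exact hc0
          · rw [if_neg hc0] at h5'; omega
        · rw [if_neg h]
          by_cases hc0 : c' = 0
          · rw [if_pos hc0] at h5'; omega
          · omega
      rw [Prod.mk.injEq]
      exact ⟨hc2, haa⟩
  · rintro e ⟨h1, h2, h3, h4, h5⟩
    have hi := h1 i
    have hi2 := h2 i
    rw [if_neg one_ne_zero] at h5
    have hk1 : k - 1 + 1 = k := by omega
    rw [hk1] at h5
    rw [Nat.mod_eq_of_lt (by omega : e.1 i < 2 ^ k)] at h5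
    have hsum : (2 : ℕ) ^ k = 2 ^ (k - 1) + 2 ^ (k - 1) := by
      rw [← two_mul, ← pow_succ']
      congr 1; omega
    omega
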